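/- arXiv:2007.12323 — 4 statements merged into one kernel-verified Lean document; each statement's English description precedes it below -/
import Mathlib

section
/- Let S be a finite collection of subsets of a ground set, and T a set such that every S ∈ S contains T. Suppose that ∑_{S₁,S₂ ∈ S} (2^{|(S₁∩S₂)\T|} − 1) ≥ |S|²/4 (sum over ordered pairs). Then there exists an integer k ≥ 1 such that the number of ordered pairs (S₁,S₂) ∈ S×S with |(S₁∩S₂)\T| = k is at least |S|²/(4·2^{2k}). -/
open Finset

lemma half_pow_sum_le_aux (I : Finset ℕ) (hI : ∀ k ∈ I, 1 ≤ k) :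
    ∑ k ∈ I, ((1:ℝ)/2)^k ≤ 1 := by
  classical
  set K := I.sup id with hK
  have hsub : I ⊆ Finset.Icc 1 K := fun k hk =>
    Finset.mem_Icc.mpr ⟨hI k hk, Finset.le_sup (f := id) hk⟩
  have h1 : ∑ k ∈ I, ((1:ℝ)/2)^k ≤ ∑ k ∈ Finset.Icc 1 K, ((1:ℝ)/2)^k :=
    Finset.sum_le_sum_of_subset_of_nonneg hsub (by intros; positivity)
  have h2 : ∑ k ∈ Finset.Icc 1 K, ((1:ℝ)/2)^k
      = ∑ k ∈ Finset.range (K+1), ((1:ℝ)/2)^k - ∑ k ∈ Finset.range 1, ((1:ℝ)/2)^k := by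
    rw [← Finset.Ico_add_one_right_eq_Icc, Finset.sum_Ico_eq_sub _ (by omega)]
  have h3 := sum_geometric_two_le (K+1)
  simp only [Finset.sum_range_one, pow_zero] at h2
  linarith



/-- If the sum over ordered pairs of `2^{|(S₁∩S₂)\T|} - 1` is at least
`|𝒮|²/4`, then some level `k ≥ 1` has at least `|𝒮|²/(4·2^{2k})` ordered pairs
intersecting on exactly `k` elements outside `T`. -/
theorem stmt0 {V : Type*} [DecidableEq V] (𝒮 : Finset (Finset V)) (T : Finset V)
    (hT : ∀ S ∈ 𝒮, T ⊆ S)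
    (hsum : ((𝒮.card : ℝ) ^ 2) / 4 ≤
      ∑ S₁ ∈ 𝒮, ∑ S₂ ∈ 𝒮, ((2 : ℝ) ^ ((S₁ ∩ S₂) \ T).card - 1)) :
    ∃ k : ℕ, 1 ≤ k ∧
      ((𝒮.card : ℝ) ^ 2) / (4 * 2 ^ (2 * k)) ≤
        (((𝒮 ×ˢ 𝒮).filter fun p => ((p.1 ∩ p.2) \ T).card = k).card : ℝ) := by
  classical
  rcases Nat.eq_zero_or_pos 𝒮.card with h0 | hpos
  · exact ⟨1, le_refl 1, by simp [h0]⟩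
  by_contra hcon
  push_neg at hcon
  set n : ℝ := (𝒮.card : ℝ) with hn
  have hn0 : 0 < n := by rw [hn]; exact_mod_cast hpos
  set P := 𝒮 ×ˢ 𝒮 with hPdef
  set f : Finset V × Finset V → ℕ := fun p => ((p.1 ∩ p.2) \ T).card with hf
  set g : ℕ → ℝ := fun k => (2:ℝ)^k - 1 with hg
  have hsum' : n ^ 2 / 4 ≤ ∑ p ∈ P, g (f p) := by
    rw [hPdef, Finset.sum_product]
    exact hsum
  rw [Finset.sum_comp g f] at hsum'
  set I := P.image f with hI
  set I₁ := I.filter (fun k => 1 ≤ k) with hI₁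
  have hsplit : ∑ k ∈ I₁, ((P.filter fun p => f p = k).card : ℝ) * g k
      = ∑ k ∈ I, ((P.filter fun p => f p = k).card : ℝ) * g k := by
    apply Finset.sum_subset (Finset.filter_subset _ _)
    intro k hk hnk
    have hk0 : k = 0 := by
      by_contra h
      exact hnk (Finset.mem_filter.mpr ⟨hk, by omega⟩)
    simp [hk0, hg]
  have hsum'' : n ^ 2 / 4 ≤ ∑ k ∈ I₁, ((P.filter fun p => f p = k).card : ℝ) * g k := by
    rw [hsplit]
    simpa [nsmul_eq_mul] using hsum'
  have hub : ∀ k ∈ I₁, ((P.filter fun p => f p = k).card : ℝ) * g k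
      < n ^ 2 / 4 * ((1:ℝ)/2)^k := by
    intro k hk
    have hk1 : 1 ≤ k := (Finset.mem_filter.mp hk).2
    have hcount := hcon k hk1
    have hgpos : 0 < g k := by
      have : (2:ℝ)^1 ≤ (2:ℝ)^k := pow_le_pow_right₀ (by norm_num) hk1
      simp only [hg]
      nlinarith
    have hstep : ((P.filter fun p => f p = k).card : ℝ) * g k
        < n ^ 2 / (4 * 2 ^ (2*k)) * g k := by
      apply mul_lt_mul_of_pos_right _ hgpos
      exact hcount
    refine hstep.trans_le ?_
    have h4k : (2:ℝ)^(2*k) = 4^k := by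
      rw [pow_mul]; norm_num
    rw [h4k]
    have hineq : ((2:ℝ)^k - 1) / 4^k ≤ ((1:ℝ)/2)^k := by
      rw [div_le_iff₀ (by positivity), div_pow, one_pow]
      have : ((4:ℝ))^k = 2^k * 2^k := by
        rw [← mul_pow]; norm_num
      rw [this]
      have h2k : (1:ℝ) ≤ 2^k := one_le_pow₀ (by norm_num)
      have hp : (0:ℝ) < 2^k := by positivity
      have he : 1 / (2:ℝ)^k * (2^k * 2^k) = 2^k := by field_simp
      rw [he]
      linarith
    calc n ^ 2 / (4 * 4^k) * g k = n ^ 2 / 4 * (((2:ℝ)^k - 1) / 4^k) := by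
          simp only [hg]; field_simp
      _ ≤ n ^ 2 / 4 * ((1:ℝ)/2)^k :=
          mul_le_mul_of_nonneg_left hineq (by positivity)
  rcases Finset.eq_empty_or_nonempty I₁ with he | hne
  · rw [he] at hsum''
    simp at hsum''
    nlinarith
  · have hlt : ∑ k ∈ I₁, ((P.filter fun p => f p = k).card : ℝ) * g k
        < ∑ k ∈ I₁, n ^ 2 / 4 * ((1:ℝ)/2)^k :=
      Finset.sum_lt_sum_of_nonempty hne hub
    have hgeo : ∑ k ∈ I₁, n ^ 2 / 4 * ((1:ℝ)/2)^k ≤ n ^ 2 / 4 := by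
      rw [← Finset.mul_sum]
      have := half_pow_sum_le_aux I₁ (fun k hk => (Finset.mem_filter.mp hk).2)
      nlinarith
    linarith
end

section
/- For every real α with 0 < α ≤ 1/2, the infinite product ∏_{x=1}^{∞} 1/(1−(1−α)^x) is at most 2^{6/α}. -/
open Finset Real

private lemma head_factor {α : ℝ} (hα0 : 0 < α) (hα1 : α ≤ 1 / 2) (n : ℕ) (hn : 1 ≤ n)
    (hna : α * n ≤ 1) : 1 / (1 - (1 - α) ^ n) ≤ 2 / (α * n) := by
  have hn0 : (1:ℝ) ≤ n := by exact_mod_cast hn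
  have ht0 : 0 < α * n := mul_pos hα0 (by linarith)
  -- (1-α)^n ≤ 1/(1+αn)
  have h1 : (1 - α) ^ n * (1 + α) ^ n ≤ 1 := by
    rw [← mul_pow]
    apply pow_le_one₀ (by nlinarith) (by nlinarith)
  have h2 : 1 + (n : ℝ) * α ≤ (1 + α) ^ n := one_add_mul_le_pow (by linarith) n
  have h3 : (0:ℝ) < 1 + (n:ℝ) * α := by nlinarith
  have h4 : (1 - α) ^ n ≤ 1 / (1 + (n:ℝ) * α) := by
    rw [le_div_iff₀ h3]
    calc (1 - α) ^ n * (1 + (n:ℝ) * α) ≤ (1 - α) ^ n * (1 + α) ^ n := by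
          apply mul_le_mul_of_nonneg_left h2 (pow_nonneg (by linarith) n)
      _ ≤ 1 := h1
  have h5 : 1 / (1 + (n:ℝ) * α) ≤ 1 - α * n / 2 := by
    rw [div_le_iff₀ h3]
    nlinarith [ht0, hna]
  have h6 : α * n / 2 ≤ 1 - (1 - α) ^ n := by nlinarith [h4.trans h5]
  calc 1 / (1 - (1 - α) ^ n) ≤ 1 / (α * n / 2) :=
        one_div_le_one_div_of_le (by positivity) h6
    _ = 2 / (α * n) := one_div_div _ _

private lemma prod_mono_subset {f : ℕ → ℝ} (hf : ∀ i, 1 ≤ f i) {s t : Finset ℕ} (h : s ⊆ t) :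
    ∏ x ∈ s, f x ≤ ∏ x ∈ t, f x := by
  have hf0 : ∀ i, (0:ℝ) ≤ f i := fun i => le_trans zero_le_one (hf i)
  rw [← Finset.prod_sdiff h]
  have h1 : (1:ℝ) ≤ ∏ x ∈ t \ s, f x := by
    calc (1:ℝ) = ∏ _x ∈ t \ s, (1:ℝ) := by simp
      _ ≤ ∏ x ∈ t \ s, f x := Finset.prod_le_prod (by norm_num) (fun i _ => hf i)
  have h2 : (0:ℝ) ≤ ∏ x ∈ s, f x := Finset.prod_nonneg (fun i _ => hf0 i)
  nlinarith [mul_le_mul_of_nonneg_right h1 h2]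

private lemma tail_factor {ε : ℝ} (h0 : 0 ≤ ε) (h1 : ε ≤ 1 / 2) :
    1 / (1 - ε) ≤ Real.exp (2 * ε) := by
  have : 1 / (1 - ε) ≤ 1 + 2 * ε := by
    rw [div_le_iff₀ (by linarith)]
    nlinarith
  calc 1 / (1 - ε) ≤ 1 + 2 * ε := this
    _ ≤ Real.exp (2 * ε) := by linarith [Real.add_one_le_exp (2 * ε)]

/-- For `0 < α ≤ 1/2`, `∏_{x=1}^∞ 1/(1-(1-α)^x) ≤ 2^{6/α}`. -/
theorem stmt4 (α : ℝ) (hα0 : 0 < α) (hα1 : α ≤ 1 / 2) :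
    (∏' x : ℕ, 1 / (1 - (1 - α) ^ (x + 1))) ≤ (2 : ℝ) ^ (6 / α) := by
  have hq0 : (0:ℝ) ≤ 1 - α := by linarith
  have hq1 : 1 - α < 1 := by linarith
  have hqlt : ∀ x : ℕ, (1 - α) ^ (x + 1) < 1 := fun x =>
    pow_lt_one₀ hq0 hq1 (Nat.succ_ne_zero x)
  have hf1 : ∀ x : ℕ, (1:ℝ) ≤ 1 / (1 - (1 - α) ^ (x + 1)) := by
    intro x
    rw [le_div_iff₀ (by linarith [hqlt x])]
    have := pow_nonneg hq0 (x + 1)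
    linarith
  have hf0 : ∀ x : ℕ, (0:ℝ) ≤ 1 / (1 - (1 - α) ^ (x + 1)) := fun x =>
    le_trans zero_le_one (hf1 x)
  have hB1 : (1:ℝ) ≤ (2:ℝ) ^ (6 / α) :=
    Real.one_le_rpow one_le_two (by positivity)
  -- basic facts about m = ⌊1/α⌋
  set m : ℕ := Nat.floor (1 / α) with hm
  have h2α : (2:ℝ) ≤ 1 / α := by
    rw [le_div_iff₀ hα0]; linarith
  have hm2 : 2 ≤ m := Nat.le_floor (by exact_mod_cast h2α)
  have hmle : (m:ℝ) ≤ 1 / α := Nat.floor_le (by positivity)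
  have hmgt : 1 / α < (m:ℝ) + 1 := Nat.lt_floor_add_one _
  have hαm1 : 1 < α * ((m:ℝ) + 1) := by
    rw [div_lt_iff₀ hα0] at hmgt; linarith [hmgt]
  have hαm : 1 / 2 ≤ α * m := by nlinarith
  have hm0 : (0:ℝ) < m := by exact_mod_cast Nat.lt_of_lt_of_le Nat.zero_lt_two hm2
  -- q^(x+1) ≤ 1/2 for x ≥ m
  have hsmall : ∀ x : ℕ, m ≤ x → (1 - α) ^ (x + 1) ≤ 1 / 2 := by
    intro x hx
    have hxm : (m:ℝ) ≤ x := by exact_mod_cast hx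
    have h1 : (1 - α) ^ (x + 1) ≤ Real.exp (-α) ^ (x + 1) :=
      pow_le_pow_left₀ hq0 (Real.one_sub_le_exp_neg α) _
    have h2 : Real.exp (-α) ^ (x + 1) ≤ Real.exp (-1) := by
      rw [← Real.exp_nat_mul]
      apply Real.exp_le_exp.2
      push_cast
      nlinarith [hαm1, hα0, mul_nonneg hα0.le (sub_nonneg.2 hxm)]
    have h4 : Real.exp (-1) ≤ 1 / 2 := by
      have hx2 : (2:ℝ) ≤ Real.exp 1 := by nlinarith [Real.exp_one_gt_d9]
      calc Real.exp (-1) = (Real.exp 1)⁻¹ := Real.exp_neg 1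
        _ ≤ 2⁻¹ := by
            apply inv_anti₀ (by norm_num) hx2
        _ = 1 / 2 := by norm_num
    exact h1.trans (h2.trans h4)
  -- the finite product bound
  have key : ∀ s : Finset ℕ, ∏ x ∈ s, 1 / (1 - (1 - α) ^ (x + 1)) ≤ (2:ℝ) ^ (6 / α) := by
    intro s
    obtain ⟨N, hN⟩ := s.exists_nat_subset_range
    have hs : ∏ x ∈ s, 1 / (1 - (1 - α) ^ (x + 1)) ≤
        ∏ x ∈ Finset.range N, 1 / (1 - (1 - α) ^ (x + 1)) :=
      prod_mono_subset hf1 hN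
    refine hs.trans ?_
    -- split the product
    rw [← Finset.prod_filter_mul_prod_filter_not (Finset.range N) (fun x => x < m)]
    have hhead : ∏ x ∈ (Finset.range N).filter (fun x => x < m),
        1 / (1 - (1 - α) ^ (x + 1)) ≤ (16:ℝ) ^ (1/α) := by
      have hsub : (Finset.range N).filter (fun x => x < m) ⊆ Finset.range m := by
        intro x hx
        simp only [Finset.mem_filter, Finset.mem_range] at hx ⊢
        exact hx.2
      have step1 : ∏ x ∈ (Finset.range N).filter (fun x => x < m),
          1 / (1 - (1 - α) ^ (x + 1)) ≤ ∏ x ∈ Finset.range m, 1 / (1 - (1 - α) ^ (x + 1)) :=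
        prod_mono_subset hf1 hsub
      have step2 : ∏ x ∈ Finset.range m, 1 / (1 - (1 - α) ^ (x + 1)) ≤
          ∏ x ∈ Finset.range m, 2 / (α * (x + 1)) := by
        apply Finset.prod_le_prod (fun i _ => hf0 i)
        intro i hi
        rw [Finset.mem_range] at hi
        have hi1 : (i:ℝ) + 1 ≤ m := by exact_mod_cast Nat.succ_le_of_lt hi
        have hmα : (m:ℝ) * α ≤ 1 := by rw [le_div_iff₀ hα0] at hmle; exact hmle
        have hma : α * ((i:ℝ) + 1) ≤ 1 := by
          nlinarith [mul_nonneg hα0.le (sub_nonneg.2 hi1)]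
        have h := head_factor hα0 hα1 (i + 1) (Nat.le_add_left 1 i) (by push_cast; exact hma)
        push_cast at h
        exact h
      have step3 : ∏ x ∈ Finset.range m, (2:ℝ) / (α * (x + 1)) = (2/α)^m / (Nat.factorial m : ℝ) := by
        have : ∀ x : ℕ, (2:ℝ) / (α * (x + 1)) = (2/α) / ((x:ℝ) + 1) := by
          intro x; field_simp
        have hprod : ((Nat.factorial m : ℕ) : ℝ) = ∏ x ∈ Finset.range m, ((x:ℝ) + 1) := by
          rw [← Finset.prod_range_add_one_eq_factorial m, Nat.cast_prod]
          push_cast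
          rfl
        rw [Finset.prod_congr rfl (fun x _ => this x), Finset.prod_div_distrib,
          Finset.prod_const, Finset.card_range, hprod]
      have step4 : (2/α)^m / (Nat.factorial m : ℝ) ≤ (16:ℝ)^m := by
        have hfacpos : (0:ℝ) < (Nat.factorial m : ℝ) := by exact_mod_cast Nat.factorial_pos m
        rw [div_le_iff₀ hfacpos]
        have hfac : (m:ℝ)^m ≤ Real.exp 1 ^ m * (Nat.factorial m : ℝ) := by
          have := Real.pow_div_factorial_le_exp (x := (m:ℝ)) (le_of_lt hm0) m
          rw [div_le_iff₀ hfacpos] at this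
          calc (m:ℝ)^m ≤ Real.exp (m:ℝ) * (Nat.factorial m : ℝ) := this
            _ = Real.exp 1 ^ m * (Nat.factorial m : ℝ) := by rw [Real.exp_one_pow]
        have h2a : (2:ℝ)/α ≤ 4 * m := by
          rw [div_le_iff₀ hα0]
          nlinarith
        calc ((2:ℝ)/α)^m ≤ (4 * (m:ℝ))^m := by
              apply pow_le_pow_left₀ (by positivity) h2a
          _ = 4^m * (m:ℝ)^m := by rw [mul_pow]
          _ ≤ 4^m * (Real.exp 1 ^ m * (Nat.factorial m : ℝ)) := by
              apply mul_le_mul_of_nonneg_left hfac (by positivity)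
          _ = (4 * Real.exp 1)^m * (Nat.factorial m : ℝ) := by rw [mul_pow]; ring
          _ ≤ (16:ℝ)^m * (Nat.factorial m : ℝ) := by
              apply mul_le_mul_of_nonneg_right _ hfacpos.le
              apply pow_le_pow_left₀ (by positivity)
              nlinarith [Real.exp_one_lt_d9]
      have step5 : (16:ℝ)^m ≤ (16:ℝ)^(1/α) := by
        rw [← Real.rpow_natCast 16 m]
        exact Real.rpow_le_rpow_of_exponent_le (by norm_num) hmle
      exact step1.trans (step2.trans (le_of_eq step3 |>.trans (step4.trans step5)))
    have htail : ∏ x ∈ (Finset.range N).filter (fun x => ¬ x < m),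
        1 / (1 - (1 - α) ^ (x + 1)) ≤ (4:ℝ) ^ (1/α) := by
      have hIco : (Finset.range N).filter (fun x => ¬ x < m) = Finset.Ico m N := by
        ext x
        simp only [Finset.mem_filter, Finset.mem_range, Finset.mem_Ico, not_lt]
        omega
      rw [hIco]
      have step1 : ∏ x ∈ Finset.Ico m N, 1 / (1 - (1 - α) ^ (x + 1)) ≤
          ∏ x ∈ Finset.Ico m N, Real.exp (2 * (1 - α) ^ (x + 1)) := by
        apply Finset.prod_le_prod (fun i _ => hf0 i)
        intro i hi
        rw [Finset.mem_Ico] at hi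
        exact tail_factor (pow_nonneg hq0 _) (hsmall i hi.1)
      have step2 : ∏ x ∈ Finset.Ico m N, Real.exp (2 * (1 - α) ^ (x + 1)) =
          Real.exp (∑ x ∈ Finset.Ico m N, 2 * (1 - α) ^ (x + 1)) :=
        (Real.exp_sum _ _).symm
      have step3 : ∑ x ∈ Finset.Ico m N, 2 * (1 - α) ^ (x + 1) ≤ 1 / α := by
        have hsum : ∑ x ∈ Finset.Ico m N, (1 - α) ^ (x + 1) ≤ (1 - α) ^ (m + 1) * (1/α) := by
          rcases le_or_gt N m with hNm | hNm
          · rw [Finset.Ico_eq_empty (by omega)]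
            simp only [Finset.sum_empty]
            positivity
          · rw [Finset.sum_Ico_eq_sum_range]
            have : ∀ i ∈ Finset.range (N - m), (1 - α) ^ (m + i + 1) =
                (1 - α) ^ (m + 1) * (1 - α) ^ i := by
              intro i _; rw [← pow_add]; ring_nf
            rw [Finset.sum_congr rfl this, ← Finset.mul_sum]
            apply mul_le_mul_of_nonneg_left _ (pow_nonneg hq0 _)
            calc ∑ i ∈ Finset.range (N - m), (1 - α) ^ i ≤
                ∑' i : ℕ, (1 - α) ^ i := by
                  apply Summable.sum_le_tsum _ (fun i _ => pow_nonneg hq0 i)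
                  exact summable_geometric_of_lt_one hq0 hq1
              _ = (1 - (1 - α))⁻¹ := tsum_geometric_of_lt_one hq0 hq1
              _ = 1/α := by rw [one_div]; ring_nf
          
        have hsmall' : (1 - α) ^ (m + 1) ≤ 1/2 := hsmall m le_rfl
        calc ∑ x ∈ Finset.Ico m N, 2 * (1 - α) ^ (x + 1) =
            2 * ∑ x ∈ Finset.Ico m N, (1 - α) ^ (x + 1) := by rw [Finset.mul_sum]
          _ ≤ 2 * ((1 - α) ^ (m + 1) * (1/α)) := by
              apply mul_le_mul_of_nonneg_left hsum (by norm_num)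
          _ ≤ 2 * (1/2 * (1/α)) := by
              apply mul_le_mul_of_nonneg_left _ (by norm_num)
              apply mul_le_mul_of_nonneg_right hsmall' (by positivity)
          _ = 1/α := by ring
      have step4 : Real.exp (1/α) ≤ (4:ℝ)^(1/α) := by
        rw [← Real.exp_one_rpow (1/α)]
        apply Real.rpow_le_rpow (Real.exp_pos 1).le _ (by positivity)
        nlinarith [Real.exp_one_lt_d9]
      calc ∏ x ∈ Finset.Ico m N, 1 / (1 - (1 - α) ^ (x + 1)) ≤
          Real.exp (∑ x ∈ Finset.Ico m N, 2 * (1 - α) ^ (x + 1)) := step2 ▸ step1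
        _ ≤ Real.exp (1/α) := Real.exp_le_exp.2 step3
        _ ≤ (4:ℝ)^(1/α) := step4
    calc (∏ x ∈ (Finset.range N).filter (fun x => x < m), 1 / (1 - (1 - α) ^ (x + 1))) *
        ∏ x ∈ (Finset.range N).filter (fun x => ¬ x < m), 1 / (1 - (1 - α) ^ (x + 1)) ≤
        (16:ℝ)^(1/α) * (4:ℝ)^(1/α) := by
          apply mul_le_mul hhead htail (Finset.prod_nonneg (fun i _ => hf0 i)) (by positivity)
      _ = (2:ℝ)^(6/α) := by
          rw [← Real.mul_rpow (by norm_num) (by norm_num)]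
          have h64 : (16:ℝ) * 4 = (2:ℝ) ^ (6:ℝ) := by
            rw [show (6:ℝ) = ((6:ℕ):ℝ) by norm_num, Real.rpow_natCast]
            norm_num
          rw [h64, ← Real.rpow_mul (by norm_num), mul_one_div]
  by_cases hM : Multipliable (fun x : ℕ => 1 / (1 - (1 - α) ^ (x + 1)))
  · exact le_of_tendsto hM.hasProd (Filter.Eventually.of_forall key)
  · rw [tprod_eq_one_of_not_multipliable hM]
    exact hB1
end

section
/- Let m ≥ 2, δ ∈ (0,1), α = 16/log₂(1/δ) with α ≤ 1/2, and define t_r = ⌈m(1−(1−α)^r) + 2r⌉ for r = 0,...,R−1 where R = ⌊(1/(16α))·log₂ m⌋. If δ > exp(−m^{3/4}) (so that the construction is valid), then for all r < R−1: t_{r+1} − t_r ≥ 1, and t_{R−1} < m. -/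
private lemma aux_chord (α : ℝ) (h0 : 0 ≤ α) (h2 : α ≤ 1/2) :
    Real.exp (-(2*α*Real.log 2)) ≤ 1 - α := by
  have hc := convexOn_exp.2 (Set.mem_univ (-Real.log 2)) (Set.mem_univ (0:ℝ))
    (by linarith : (0:ℝ) ≤ 2*α) (by linarith : (0:ℝ) ≤ 1 - 2*α) (by ring)
  simp only [smul_eq_mul, mul_zero, add_zero, Real.exp_zero] at hc
  have he : Real.exp (-Real.log 2) = 1/2 := by
    rw [Real.exp_neg, Real.exp_log (by norm_num : (0:ℝ) < 2)]; norm_num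
  rw [he] at hc
  have heq : 2*α*(-Real.log 2) = -(2*α*Real.log 2) := by ring
  rw [heq] at hc
  linarith

private lemma aux_log2sq : (2:ℝ) ≤ 32 * (Real.log 2)^2 := by
  have h := Real.log_two_gt_d9
  nlinarith

set_option maxHeartbeats 1600000 in
/-- Parameter verification for the hard distribution of `UR_dec`:
with `α = 16/log₂(1/δ) ≤ 1/2`, `t r = ⌈m(1-(1-α)^r) + 2r⌉`, `R = ⌊(1/(16α))·log₂ m⌋`,
and `δ > exp(-m^{3/4})`, the sequence satisfies `t (r+1) - t r ≥ 1` for `r < R-1` and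
`t (R-1) < m`. -/
theorem stmt13 (m : ℕ) (hm : 2 ≤ m) (δ : ℝ) (hδ0 : 0 < δ) (hδ1 : δ < 1)
    (α : ℝ) (hα : α = 16 / Real.logb 2 (1 / δ)) (hα2 : α ≤ 1 / 2)
    (R : ℕ) (hR : R = ⌊(1 / (16 * α)) * Real.logb 2 m⌋₊)
    (t : ℕ → ℤ) (ht : ∀ r : ℕ, t r = ⌈(m : ℝ) * (1 - (1 - α) ^ r) + 2 * r⌉)
    (hδ2 : Real.exp (-(m : ℝ) ^ ((3 : ℝ) / 4)) < δ) :
    (∀ r : ℕ, r < R - 1 → 1 ≤ t (r + 1) - t r) ∧ t (R - 1) < (m : ℤ) := by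
  have hm1 : (1:ℝ) ≤ (m:ℝ) := by exact_mod_cast Nat.one_le_of_lt hm
  have hmpos : (0:ℝ) < (m:ℝ) := by linarith
  have hδinv : (1:ℝ) < 1/δ := by rw [lt_div_iff₀ hδ0]; linarith
  have hlogpos : 0 < Real.logb 2 (1/δ) := Real.logb_pos one_lt_two hδinv
  have hα0 : 0 < α := by rw [hα]; positivity
  have h1α : 0 ≤ 1 - α := by linarith
  set L := Real.log (m:ℝ) with hL
  set L2 := Real.log 2 with hL2def
  have hL2 : (0.6931471803 : ℝ) < L2 := Real.log_two_gt_d9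
  have hL0 : 0 ≤ L := Real.log_nonneg hm1
  constructor
  · intro r _
    rw [ht (r+1), ht r]
    have hp : (0:ℝ) ≤ (1-α)^r := pow_nonneg h1α r
    have key : (m:ℝ)*(1-(1-α)^r) + 2*r + 2 ≤ (m:ℝ)*(1-(1-α)^(r+1)) + 2*(r+1:ℕ) := by
      have hs : (1-α)^(r+1) = (1-α)^r * (1-α) := pow_succ _ _
      push_cast
      nlinarith [mul_nonneg (mul_nonneg hmpos.le hp) hα0.le]
    have h1 : (⌈(m:ℝ)*(1-(1-α)^r) + 2*r⌉ : ℝ) < (m:ℝ)*(1-(1-α)^(r+1)) + 2*(r+1:ℕ) := by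
      have := Int.ceil_lt_add_one ((m:ℝ)*(1-(1-α)^r) + 2*r)
      linarith
    have := Int.lt_ceil.2 h1
    omega
  · by_cases hR1 : R ≤ 1
    · have h0 : R - 1 = 0 := by omega
      rw [h0, ht 0]
      norm_num
      exact_mod_cast Nat.lt_of_lt_of_le Nat.zero_lt_two hm
    · push_neg at hR1
      set r := R - 1 with hrdef
      clear_value r
      have hrR : (r:ℝ) = (R:ℝ) - 1 := by
        have : r + 1 = R := by omega
        push_cast [← this]; ring
      have hrleR : (r:ℝ) ≤ (R:ℝ) := by linarith
      -- bound on logb 2 (1/δ)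
      have hlogδ : Real.log (1/δ) < (m:ℝ)^((3:ℝ)/4) := by
        have h := Real.log_lt_log (Real.exp_pos _) hδ2
        rw [Real.log_exp] at h
        rw [Real.log_div one_ne_zero (ne_of_gt hδ0), Real.log_one]
        linarith
      have hL2pos : (0:ℝ) < L2 := by linarith
      have hm34pos : (0:ℝ) < (m:ℝ)^((3:ℝ)/4) := Real.rpow_pos_of_pos hmpos _
      have hlogb_lt : Real.logb 2 (1/δ) < (m:ℝ)^((3:ℝ)/4) / L2 := by
        rw [Real.logb, div_lt_div_iff₀ hL2pos hL2pos]
        have : Real.log (1/δ) * L2 < (m:ℝ)^((3:ℝ)/4) * L2 := by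
          exact mul_lt_mul_of_pos_right hlogδ hL2pos
        simpa [hL2def] using this
      have hinv : 1/α ≤ (m:ℝ)^((3:ℝ)/4)/(16*L2) := by
        rw [hα, one_div_div, div_le_div_iff₀ (by norm_num : (0:ℝ) < 16) (by positivity)]
        have h := mul_lt_mul_of_pos_right hlogb_lt hL2pos
        rw [div_mul_cancel₀ _ (ne_of_gt hL2pos)] at h
        nlinarith
      -- upper bound on R
      have hlogbm : Real.logb 2 (m:ℝ) = L / L2 := by rw [Real.logb]
      have hRub : (R:ℝ) ≤ 1/(16*α) * (L/L2) := by
        rw [hR, ← hlogbm]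
        exact Nat.floor_le (mul_nonneg (div_nonneg zero_le_one (by nlinarith))
          (Real.logb_nonneg one_lt_two hm1))
      -- 16 α L2 R ≤ L
      have hαRL : 16*α*L2*(R:ℝ) ≤ L := by
        have heq : 1/(16*α) * (L/L2) = L/(16*α*L2) := by field_simp
        rw [heq, le_div_iff₀ (by positivity : (0:ℝ) < 16*α*L2)] at hRub
        linarith [hRub]
      -- log m ≤ 8 m^{1/8}
      have hm18pos : (0:ℝ) < (m:ℝ)^((1:ℝ)/8) := Real.rpow_pos_of_pos hmpos _
      have hlnm : L ≤ 8 * (m:ℝ)^((1:ℝ)/8) := by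
        have h1 := Real.log_le_sub_one_of_pos hm18pos
        rw [Real.log_rpow hmpos] at h1
        linarith
      -- 2R ≤ m^{7/8}
      have hm78 : (m:ℝ)^((3:ℝ)/4) * (m:ℝ)^((1:ℝ)/8) = (m:ℝ)^((7:ℝ)/8) := by
        rw [← Real.rpow_add hmpos]; norm_num
      have hm78pos : (0:ℝ) < (m:ℝ)^((7:ℝ)/8) := Real.rpow_pos_of_pos hmpos _
      have hRub2 : (R:ℝ) ≤ ((m:ℝ)^((3:ℝ)/4)/(16*L2)) * (L/(16*L2)) := by
        calc (R:ℝ) ≤ 1/(16*α) * (L/L2) := hRub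
        _ = (1/α) * (L/(16*L2)) := by ring
        _ ≤ ((m:ℝ)^((3:ℝ)/4)/(16*L2)) * (L/(16*L2)) :=
            mul_le_mul_of_nonneg_right hinv (by positivity)
      have h2R : 2*(R:ℝ) ≤ (m:ℝ)^((7:ℝ)/8) := by
        have hstep : ((m:ℝ)^((3:ℝ)/4)/(16*L2)) * (L/(16*L2)) ≤ ((m:ℝ)^((3:ℝ)/4)/(16*L2)) * ((8*(m:ℝ)^((1:ℝ)/8))/(16*L2)) := by
          apply mul_le_mul_of_nonneg_left _ (by positivity)
          apply div_le_div_of_nonneg_right hlnm (by positivity)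
        have heq2 : ((m:ℝ)^((3:ℝ)/4)/(16*L2)) * ((8*(m:ℝ)^((1:ℝ)/8))/(16*L2)) = (m:ℝ)^((7:ℝ)/8) / (32*L2^2) := by
          rw [← hm78]; ring
        have hfrac : (m:ℝ)^((7:ℝ)/8) / (32*L2^2) ≤ (m:ℝ)^((7:ℝ)/8) / 2 := by
          have h32 : (2:ℝ) ≤ 32*L2^2 := aux_log2sq
          exact div_le_div_of_nonneg_left hm78pos.le (by norm_num) h32
        have hchain : (R:ℝ) ≤ (m:ℝ)^((7:ℝ)/8) / 2 := by
          calc (R:ℝ) ≤ ((m:ℝ)^((3:ℝ)/4)/(16*L2)) * (L/(16*L2)) := hRub2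
          _ ≤ ((m:ℝ)^((3:ℝ)/4)/(16*L2)) * ((8*(m:ℝ)^((1:ℝ)/8))/(16*L2)) := hstep
          _ = (m:ℝ)^((7:ℝ)/8) / (32*L2^2) := heq2
          _ ≤ (m:ℝ)^((7:ℝ)/8) / 2 := hfrac
        linarith
      -- chord: exp(-(2 α L2)) ≤ 1 - α
      have hchord : Real.exp (-(2*α*L2)) ≤ 1 - α := aux_chord α hα0.le hα2
      -- (1-α)^r ≥ exp(-(L/8))
      have hpow : Real.exp (-(L/8)) ≤ (1-α)^r := by
        have h1 : Real.exp (-(2*α*L2))^r ≤ (1-α)^r :=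
          pow_le_pow_left₀ (Real.exp_pos _).le hchord r
        have h2 : Real.exp (-(2*α*L2))^r = Real.exp ((r:ℝ) * (-(2*α*L2))) := by
          rw [← Real.exp_nat_mul]
        have h3 : -(L/8) ≤ (r:ℝ) * (-(2*α*L2)) := by
          have h4 : 2*α*L2*(r:ℝ) ≤ 2*α*L2*(R:ℝ) :=
            mul_le_mul_of_nonneg_left hrleR (by positivity)
          linarith [h4, hαRL]
        calc Real.exp (-(L/8)) ≤ Real.exp ((r:ℝ) * (-(2*α*L2))) := Real.exp_le_exp.2 h3
        _ = Real.exp (-(2*α*L2))^r := h2.symm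
        _ ≤ (1-α)^r := h1
      have hme : (m:ℝ) * Real.exp (-(L/8)) = (m:ℝ)^((7:ℝ)/8) := by
        rw [Real.rpow_def_of_pos hmpos, ← hL]
        rw [show (m:ℝ) = Real.exp L by rw [hL, Real.exp_log hmpos]]
        rw [← Real.exp_add]
        congr 1
        ring
      -- final
      have hkey : (m:ℝ)*(1-(1-α)^r) + 2*r ≤ (m:ℝ) - 1 := by
        have h1 : (m:ℝ)^((7:ℝ)/8) ≤ (m:ℝ) * (1-α)^r := by
          rw [← hme]
          exact mul_le_mul_of_nonneg_left hpow hmpos.le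
        have h2 : 2*(r:ℝ) + 1 ≤ (m:ℝ)^((7:ℝ)/8) := by
          rw [hrR]; linarith
        linarith [h1, h2]
      rw [ht r]
      have : (⌈(m:ℝ)*(1-(1-α)^r) + 2*r⌉ : ℤ) ≤ (m:ℤ) - 1 := by
        apply Int.ceil_le.2
        push_cast
        linarith
      omega
end

section
/- Suppose t_0 = 0 < t_1 < ... < t_i ≤ m are integers, k_0,...,k_{i−1} are positive integers with t_{j+1} ≥ t_j + k_j, and t_r satisfies t_r ≥ m(1−(1−α)^r) + 2r − 1 and t_r ≤ m(1−(1−α)^r) + 2r for r_0=0, r_{j+1}=r_j+k_j with α ∈ (0,1/2]. Sample, for each j = 0,...,i−1, a uniformly random set ℬ_j of t_{r_{j+1}} − t_{r_j} − k_j blocks out of the m − t_{r_j} − k_j blocks not yet used. For a fixed subset 𝒯 of t_{r_i} blocks, the probability that every sampled block in every round lies in 𝒯 is at most C(m, t_{r_i})^{−1} · ∏_{j=0}^{i−1} (1/(1−(1−α)^{r_i−r_j}))^{k_j}. -/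
lemma stmt14_telescope (g D F : ℕ → ℝ) :
    ∀ n, (∀ j < n, F j = g (j + 1) / g j * D j) → (∀ j ≤ n, g j ≠ 0) →
      ∏ j ∈ Finset.range n, F j = g n / g 0 * ∏ j ∈ Finset.range n, D j := by
  intro n
  induction n with
  | zero => intro _ hg; simp [div_self (hg 0 le_rfl)]
  | succ n ih =>
    intro hF hg
    rw [Finset.prod_range_succ, Finset.prod_range_succ,
      ih (fun j hj => hF j (by omega)) (fun j hj => hg j (by omega)),
      hF n (by omega)]
    have h0 := hg 0 (by omega)
    have hn := hg n (by omega)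
    field_simp

/-- core computation of Lemma 3.5: the probability that all randomly
sampled blocks lie in a fixed family `𝒯` of `t (r i)` blocks, which equals
`∏_{j<i} C(t(r i)-t(r j)-k j, t(r (j+1))-t(r j)-k j)/C(m-t(r j)-k j, t(r (j+1))-t(r j)-k j)`,
is at most `C(m, t(r i))⁻¹ · ∏_{j<i} (1/(1-(1-α)^{r i - r j}))^{k j}`. -/
theorem stmt14 (m i : ℕ) (α : ℝ) (hα0 : 0 < α) (hα1 : α ≤ 1 / 2)
    (k : ℕ → ℕ) (hk : ∀ j, 1 ≤ k j)
    (r : ℕ → ℕ) (hr0 : r 0 = 0) (hr : ∀ j, r (j + 1) = r j + k j)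
    (t : ℕ → ℕ)
    (htlo : ∀ j ≤ i, (m : ℝ) * (1 - (1 - α) ^ (r j)) + 2 * (r j) - 1 ≤ (t (r j) : ℝ))
    (hthi : ∀ j ≤ i, (t (r j) : ℝ) ≤ (m : ℝ) * (1 - (1 - α) ^ (r j)) + 2 * (r j))
    (hstep : ∀ j < i, t (r j) + k j ≤ t (r (j + 1)))
    (htm : t (r i) ≤ m) :
    ∏ j ∈ Finset.range i,
        ((Nat.choose (t (r i) - t (r j) - k j) (t (r (j + 1)) - t (r j) - k j) : ℝ) /
          (Nat.choose (m - t (r j) - k j) (t (r (j + 1)) - t (r j) - k j) : ℝ)) ≤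
      (1 / (Nat.choose m (t (r i)) : ℝ)) *
        ∏ j ∈ Finset.range i, (1 / (1 - (1 - α) ^ (r i - r j))) ^ (k j) := by
  have hα2 : (0:ℝ) < 1 - α := by linarith
  have hα3 : (1:ℝ) - α < 1 := by linarith
  -- t (r 0) = 0
  have ht0 : t (r 0) = 0 := by
    have h := hthi 0 (Nat.zero_le i)
    rw [hr0] at h
    simp only [pow_zero, Nat.cast_zero] at h
    have h' : (t (r 0) : ℝ) ≤ 0 := by
      rw [hr0]; simpa using h
    have : (t (r 0) : ℝ) = 0 := le_antisymm h' (Nat.cast_nonneg _)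
    exact_mod_cast this
  -- r is monotone
  have hrmono : Monotone r := monotone_nat_of_le_succ (fun j => by rw [hr j]; omega)
  -- t ∘ r is monotone up to i, with steps
  have htmono : ∀ b ≤ i, ∀ a ≤ b, t (r a) ≤ t (r b) := by
    intro b
    induction b with
    | zero => intro _ a ha; interval_cases a; exact le_rfl
    | succ b ih =>
      intro hb a ha
      rcases Nat.eq_or_lt_of_le ha with h | h
      · rw [h]
      · have h1 := ih (by omega) a (by omega)
        have h2 := hstep b (by omega)
        omega
  -- key real inequality
  have hkey : ∀ j < i, ((m : ℝ) - t (r j)) * (1 - (1 - α) ^ (r i - r j)) ≤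
      (t (r i) : ℝ) - t (r j) - k j := by
    intro j hj
    have hrji : r j ≤ r i := hrmono (le_of_lt hj)
    have hrjk : r j + k j ≤ r i := by
      have := hrmono (show j + 1 ≤ i by omega)
      rw [hr j] at this; omega
    have hpow : (1 - α) ^ (r i - r j) * (1 - α) ^ (r j) = (1 - α) ^ (r i) := by
      rw [← pow_add]; congr 1; omega
    have hTi := htlo i le_rfl
    have hkj := hk j
    have hkjR : (1:ℝ) ≤ k j := by exact_mod_cast hkj
    have hrjkR : (r j : ℝ) + k j ≤ r i := by exact_mod_cast hrjk
    rcases Nat.eq_zero_or_pos j with hj0 | hj0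
    · subst hj0
      rw [ht0, hr0] at *
      simp only [Nat.cast_zero, pow_zero, Nat.sub_zero, sub_zero, mul_one] at *
      nlinarith
    · -- j ≥ 1, so r j ≥ 1
      have hrj1 : 1 ≤ r j := by
        have := hrmono (show 1 ≤ j from hj0)
        rw [hr 0, hr0] at this
        have := hk 0; omega
      have hrj1R : (1:ℝ) ≤ r j := by exact_mod_cast hrj1
      have hTj := hthi j (le_of_lt hj)
      have hTjlo := htlo j (le_of_lt hj)
      set β := (1 - α) ^ (r j) with hβ
      set γ := (1 - α) ^ (r i) with hγ
      set δ := (1 - α) ^ (r i - r j) with hδ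
      have hδ0 : 0 ≤ δ := le_of_lt (pow_pos hα2 _)
      have hδ1 : δ ≤ 1 := pow_le_one₀ (le_of_lt hα2) (by linarith)
      have e1 : ((m:ℝ) - t (r j)) * (1 - δ) ≤ ((m:ℝ) * β - 2 * r j + 1) * (1 - δ) :=
        mul_le_mul_of_nonneg_right (by linarith) (by linarith)
      have e2 : ((m:ℝ) * β - 2 * r j + 1) * (1 - δ)
          = (m:ℝ) * β - (m:ℝ) * (δ * β) - (2 * (r j:ℝ) - 1) * (1 - δ) := by ring
      rw [hpow] at e2
      have e3 : (0:ℝ) ≤ (2 * (r j:ℝ) - 1) * (1 - δ) :=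
        mul_nonneg (by linarith) (by linarith)
      linarith
  -- positivity
  have hpos : ∀ j < i, t (r j) + k j < t (r i) := by
    intro j hj
    have h1 := hkey j hj
    have h2 : t (r j) < t (r i) := by
      have h2a := hstep j hj
      have h2b := htmono i le_rfl (j+1) hj
      have h2c := hk j
      omega
    have h3 : t (r i) ≤ m := htm
    have hm : (1:ℝ) ≤ (m:ℝ) - t (r j) := by
      have : t (r j) + 1 ≤ m := by omega
      have := (Nat.cast_le (α := ℝ)).mpr this
      push_cast at this; linarith
    have hrlt : r j < r i := by
      have := hrmono (show j + 1 ≤ i by omega)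
      rw [hr j] at this
      have := hk j; omega
    have hd : (1 - α) ^ (r i - r j) < 1 :=
      pow_lt_one₀ (le_of_lt hα2) hα3 (by omega)
    have hlhs : (0:ℝ) < ((m : ℝ) - t (r j)) * (1 - (1 - α) ^ (r i - r j)) :=
      mul_pos (by linarith) (by linarith)
    have : (0:ℝ) < (t (r i) : ℝ) - t (r j) - k j := lt_of_lt_of_le hlhs h1
    have : ((t (r j) : ℝ) + k j) < t (r i) := by linarith
    exact_mod_cast this
  -- the telescoping function
  set g : ℕ → ℝ := fun j => (Nat.choose (m - t (r j)) (t (r i) - t (r j)) : ℝ) with hg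
  set D : ℕ → ℝ := fun j => (Nat.descFactorial (m - t (r j)) (k j) : ℝ) /
      (Nat.descFactorial (t (r i) - t (r j)) (k j) : ℝ) with hD
  have hgne : ∀ j ≤ i, g j ≠ 0 := by
    intro j hj
    have h1 : t (r j) ≤ t (r i) := htmono i le_rfl j hj
    have h2 : t (r i) - t (r j) ≤ m - t (r j) := by omega
    have := Nat.choose_pos h2
    simp only [hg]
    positivity
  have hfac : ∀ j < i,
      ((Nat.choose (t (r i) - t (r j) - k j) (t (r (j + 1)) - t (r j) - k j) : ℝ) /
        (Nat.choose (m - t (r j) - k j) (t (r (j + 1)) - t (r j) - k j) : ℝ))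
      = g (j + 1) / g j * D j := by
    intro j hj
    have hs := hstep j hj
    have h1 : t (r (j+1)) ≤ t (r i) := htmono i le_rfl (j+1) hj
    have h2 : t (r j) ≤ t (r i) := htmono i le_rfl j (by omega)
    have hpj := hpos j hj
    have fne : ∀ n : ℕ, ((Nat.factorial n : ℕ) : ℝ) ≠ 0 := fun n =>
      Nat.cast_ne_zero.mpr (Nat.factorial_pos n).ne'
    have c1 : ((Nat.choose (t (r i) - t (r j) - k j) (t (r (j + 1)) - t (r j) - k j)) : ℝ)
        = ((Nat.factorial (t (r i) - t (r j) - k j) : ℕ) : ℝ) /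
          (((Nat.factorial (t (r (j+1)) - t (r j) - k j) : ℕ) : ℝ) * ((Nat.factorial (t (r i) - t (r (j+1))) : ℕ) : ℝ)) := by
      rw [Nat.cast_choose ℝ (by omega),
        show (t (r i) - t (r j) - k j) - (t (r (j+1)) - t (r j) - k j) = t (r i) - t (r (j+1))
          from by omega]
    have c2 : ((Nat.choose (m - t (r j) - k j) (t (r (j + 1)) - t (r j) - k j)) : ℝ)
        = ((Nat.factorial (m - t (r j) - k j) : ℕ) : ℝ) /
          (((Nat.factorial (t (r (j+1)) - t (r j) - k j) : ℕ) : ℝ) * ((Nat.factorial (m - t (r (j+1))) : ℕ) : ℝ)) := by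
      rw [Nat.cast_choose ℝ (by omega),
        show (m - t (r j) - k j) - (t (r (j+1)) - t (r j) - k j) = m - t (r (j+1))
          from by omega]
    have c3 : g j = ((Nat.factorial (m - t (r j)) : ℕ) : ℝ) /
        (((Nat.factorial (t (r i) - t (r j)) : ℕ) : ℝ) * ((Nat.factorial (m - t (r i)) : ℕ) : ℝ)) := by
      simp only [hg]
      rw [Nat.cast_choose ℝ (by omega),
        show (m - t (r j)) - (t (r i) - t (r j)) = m - t (r i) from by omega]
    have c4 : g (j+1) = ((Nat.factorial (m - t (r (j+1))) : ℕ) : ℝ) /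
        (((Nat.factorial (t (r i) - t (r (j+1))) : ℕ) : ℝ) * ((Nat.factorial (m - t (r i)) : ℕ) : ℝ)) := by
      simp only [hg]
      rw [Nat.cast_choose ℝ (by omega),
        show (m - t (r (j+1))) - (t (r i) - t (r (j+1))) = m - t (r i) from by omega]
    have c5 : ((Nat.descFactorial (m - t (r j)) (k j)) : ℝ)
        = ((Nat.factorial (m - t (r j)) : ℕ) : ℝ) / ((Nat.factorial (m - t (r j) - k j) : ℕ) : ℝ) := by
      rw [eq_div_iff (fne _)]
      have h := Nat.factorial_mul_descFactorial (show k j ≤ m - t (r j) by omega)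
      rw [mul_comm]
      exact_mod_cast h
    have c6 : ((Nat.descFactorial (t (r i) - t (r j)) (k j)) : ℝ)
        = ((Nat.factorial (t (r i) - t (r j)) : ℕ) : ℝ) / ((Nat.factorial (t (r i) - t (r j) - k j) : ℕ) : ℝ) := by
      rw [eq_div_iff (fne _)]
      have h := Nat.factorial_mul_descFactorial (show k j ≤ t (r i) - t (r j) by omega)
      rw [mul_comm]
      exact_mod_cast h
    simp only [hD]
    rw [c1, c2, c3, c4, c5, c6]
    field_simp
  rw [stmt14_telescope g D _ i hfac hgne]
  have hgi : g i = 1 := by simp [hg]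
  have hg0 : g 0 = (Nat.choose m (t (r i)) : ℝ) := by simp [hg, ht0]
  rw [hgi, hg0]
  refine mul_le_mul_of_nonneg_left ?_ (by positivity)
  refine Finset.prod_le_prod (fun j hj => div_nonneg (Nat.cast_nonneg _) (Nat.cast_nonneg _)) ?_
  · intro j hj
    rw [Finset.mem_range] at hj
    -- bound D j
    have hpj := hpos j hj
    have h2 : t (r j) ≤ t (r i) := htmono i le_rfl j (by omega)
    have hc : (0:ℝ) < 1 - (1 - α) ^ (r i - r j) := by
      have hrlt : r j < r i := by
        have := hrmono (show j + 1 ≤ i by omega)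
        rw [hr j] at this
        have := hk j; omega
      have := pow_lt_one₀ (le_of_lt hα2) hα3 (show r i - r j ≠ 0 by omega)
      linarith
    have hb : (0:ℝ) < ((t (r i) - t (r j) - k j : ℕ) : ℝ) := by
      have : 1 ≤ t (r i) - t (r j) - k j := by omega
      exact_mod_cast Nat.lt_of_lt_of_le Nat.zero_lt_one (by exact_mod_cast this)
    have hnum : ((Nat.descFactorial (m - t (r j)) (k j)) : ℝ)
        ≤ ((m - t (r j) : ℕ) : ℝ) ^ (k j) := by
      exact_mod_cast Nat.descFactorial_le_pow _ _
    have hden : ((t (r i) - t (r j) - k j : ℕ) : ℝ) ^ (k j)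
        ≤ ((Nat.descFactorial (t (r i) - t (r j)) (k j)) : ℝ) := by
      have h := Nat.pow_sub_le_descFactorial (t (r i) - t (r j)) (k j)
      have h' : (t (r i) - t (r j) - k j) ^ (k j) ≤ (t (r i) - t (r j) + 1 - k j) ^ (k j) :=
        Nat.pow_le_pow_left (by omega) _
      exact_mod_cast le_trans h' h
    have hdpos : (0:ℝ) < ((Nat.descFactorial (t (r i) - t (r j)) (k j)) : ℝ) :=
      lt_of_lt_of_le (pow_pos hb _) hden
    have step1 : D j ≤ ((m - t (r j) : ℕ) : ℝ) ^ (k j) /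
        ((t (r i) - t (r j) - k j : ℕ) : ℝ) ^ (k j) := by
      simp only [hD]
      exact div_le_div₀ (by positivity) hnum (pow_pos hb _) hden
    have step2 : ((m - t (r j) : ℕ) : ℝ) ^ (k j) / ((t (r i) - t (r j) - k j : ℕ) : ℝ) ^ (k j)
        ≤ (1 / (1 - (1 - α) ^ (r i - r j))) ^ (k j) := by
      rw [← div_pow]
      apply pow_le_pow_left₀ (by positivity)
      rw [div_le_div_iff₀ hb hc]
      have e1 : ((m - t (r j) : ℕ) : ℝ) = (m : ℝ) - t (r j) := by
        have : t (r j) ≤ m := by omega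
        push_cast [this]; ring
      have e2 : ((t (r i) - t (r j) - k j : ℕ) : ℝ) = (t (r i) : ℝ) - t (r j) - k j := by
        push_cast [show k j ≤ t (r i) - t (r j) from by omega,
          show t (r j) ≤ t (r i) from h2]
        ring
      rw [e1, e2]
      have := hkey j hj
      linarith
    exact le_trans step1 step2
end
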